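/- Let σ = 1 and let ν be a Lévy measure on ℝ^d satisfying ν(B_r^c) ≤ Λ/r for all r > 0 and the cancellation condition ∫_{r₁ ≤ |y| ≤ r₂} y dν(y) = 0 for all 0 < r₁ < r₂. Define m(ξ) = ∫(e^{iξ·y} − 1 − i ξ·y 1_{|y|≤1}) dν(y). Then |Im m(ξ)| = |∫ (sin(ξ·y) − ξ·y 1_{|y|≤1}) dν(y)| ≤ N(Λ) |ξ| for all ξ ∈ ℝ^d. -/

import Mathlib

open MeasureTheory Metric Set
open scoped InnerProductSpace ENNReal

noncomputable section

lemma momB {d : ℕ} (Λ : ℝ) (hΛ : 0 ≤ Λ) (ν : Measure (EuclideanSpace ℝ (Fin d)))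
    (hν : ∀ r : ℝ, 0 < r → ν {y | r < ‖y‖} ≤ ENNReal.ofReal (Λ / r))
    (R : ℝ) (hR : 0 < R) :
    ∫⁻ y in {y : EuclideanSpace ℝ (Fin d) | ‖y‖ ≤ R}, ENNReal.ofReal (‖y‖ ^ 2) ∂ν
      ≤ ENNReal.ofReal (2 * Λ * R) := by
  set μ := ν.restrict {y : EuclideanSpace ℝ (Fin d) | ‖y‖ ≤ R} with hμ
  have hBmeas : MeasurableSet {y : EuclideanSpace ℝ (Fin d) | ‖y‖ ≤ R} :=
    measurableSet_le measurable_norm measurable_const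
  have f_nn : (0 : EuclideanSpace ℝ (Fin d) → ℝ) ≤ᵐ[μ] fun y => ‖y‖ :=
    Filter.Eventually.of_forall fun y => norm_nonneg y
  have f_mble : AEMeasurable (fun y : EuclideanSpace ℝ (Fin d) => ‖y‖) μ :=
    measurable_norm.aemeasurable
  have key := lintegral_rpow_eq_lintegral_meas_lt_mul μ f_nn f_mble (p := 2) (by norm_num)
  have hpow : ∀ y : EuclideanSpace ℝ (Fin d),
      ENNReal.ofReal (‖y‖ ^ (2:ℝ)) = ENNReal.ofReal (‖y‖ ^ 2) := by
    intro y; rw [show (2:ℝ) = ((2:ℕ):ℝ) by norm_num, Real.rpow_natCast]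
  simp_rw [hpow] at key
  rw [key]
  have hbound : ∀ t ∈ Ioi (0:ℝ),
      μ {a : EuclideanSpace ℝ (Fin d) | t < ‖a‖} * ENNReal.ofReal (t ^ (2 - 1 : ℝ))
        ≤ (Ioc (0:ℝ) R).indicator (fun _ => ENNReal.ofReal Λ) t := by
    intro t ht
    rw [mem_Ioi] at ht
    have hmeas : MeasurableSet {a : EuclideanSpace ℝ (Fin d) | t < ‖a‖} :=
      measurableSet_lt measurable_const measurable_norm
    by_cases hcase : t ≤ R
    · rw [indicator_of_mem (by exact ⟨ht, hcase⟩)]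
      calc μ {a : EuclideanSpace ℝ (Fin d) | t < ‖a‖} * ENNReal.ofReal (t ^ (2 - 1 : ℝ))
          ≤ ENNReal.ofReal (Λ / t) * ENNReal.ofReal t := by
            apply mul_le_mul'
            · calc μ {a : EuclideanSpace ℝ (Fin d) | t < ‖a‖}
                    = ν ({a : EuclideanSpace ℝ (Fin d) | t < ‖a‖} ∩ {y | ‖y‖ ≤ R}) :=
                      Measure.restrict_apply hmeas
                _ ≤ ν {a : EuclideanSpace ℝ (Fin d) | t < ‖a‖} := measure_mono inter_subset_left
                _ ≤ ENNReal.ofReal (Λ / t) := hν t ht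
            · norm_num
        _ = ENNReal.ofReal Λ := by
            rw [← ENNReal.ofReal_mul (by positivity), div_mul_cancel₀ _ (ne_of_gt ht)]
    · have : μ {a : EuclideanSpace ℝ (Fin d) | t < ‖a‖} = 0 := by
        rw [hμ, Measure.restrict_apply hmeas]
        convert measure_empty
        · ext y; simp only [mem_inter_iff, mem_setOf_eq, mem_empty_iff_false, iff_false]
          rintro ⟨h1, h2⟩; exact hcase (le_trans h1.le h2)
        · infer_instance
      rw [this, zero_mul]
      exact zero_le
  calc ENNReal.ofReal (2:ℝ) * ∫⁻ t in Ioi (0:ℝ),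
        μ {a : EuclideanSpace ℝ (Fin d) | t < ‖a‖} * ENNReal.ofReal (t ^ (2 - 1 : ℝ))
      ≤ ENNReal.ofReal (2:ℝ) * ∫⁻ t in Ioi (0:ℝ),
          (Ioc (0:ℝ) R).indicator (fun _ => ENNReal.ofReal Λ) t := by
        refine mul_le_mul' le_rfl (setLIntegral_mono ?_ hbound)
        exact Measurable.indicator measurable_const measurableSet_Ioc
    _ ≤ ENNReal.ofReal (2 * Λ * R) := by
        rw [lintegral_indicator measurableSet_Ioc, setLIntegral_const,
          Measure.restrict_apply measurableSet_Ioc]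
        have : (Ioc (0:ℝ) R ∩ Ioi 0) = Ioc (0:ℝ) R := by
          rw [inter_eq_left]; exact Ioc_subset_Ioi_self
        rw [this, Real.volume_Ioc]
        rw [← ENNReal.ofReal_mul hΛ, ← ENNReal.ofReal_mul (by norm_num)]
        apply ENNReal.ofReal_le_ofReal
        nlinarith

lemma annulus_zero {d : ℕ} (Λ : ℝ) (ν : Measure (EuclideanSpace ℝ (Fin d)))
    (hν : ∀ r : ℝ, 0 < r → ν {y | r < ‖y‖} ≤ ENNReal.ofReal (Λ / r))
    (hcancel : ∀ r₁ r₂ : ℝ, 0 < r₁ → r₁ < r₂ →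
      (∫ y in {y : EuclideanSpace ℝ (Fin d) | r₁ ≤ ‖y‖ ∧ ‖y‖ ≤ r₂}, y ∂ν) = 0)
    (a b : ℝ) (ha : 0 < a) (hab : a < b) :
    ∫ y in {y : EuclideanSpace ℝ (Fin d) | a < ‖y‖ ∧ ‖y‖ ≤ b}, y ∂ν = 0 := by
  set E := EuclideanSpace ℝ (Fin d)
  set A : Set E := {y : E | a < ‖y‖ ∧ ‖y‖ ≤ b} with hA
  set Aseq : ℕ → Set E := fun n => {y : E | a + (b - a)/(n + 2) ≤ ‖y‖ ∧ ‖y‖ ≤ b} with hAseq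
  have hb : 0 < b := lt_trans ha hab
  have hmeasA : MeasurableSet A :=
    (measurableSet_lt measurable_const measurable_norm).inter
      (measurableSet_le measurable_norm measurable_const)
  have hmeasAn : ∀ n, MeasurableSet (Aseq n) := fun n =>
    (measurableSet_le measurable_const measurable_norm).inter
      (measurableSet_le measurable_norm measurable_const)
  have heps : ∀ n : ℕ, 0 < (b - a)/((n:ℝ) + 2) := fun n => div_pos (sub_pos.2 hab) (by positivity)
  have hlt : ∀ n : ℕ, a + (b - a)/((n:ℝ) + 2) < b := by
    intro n
    have h1 : (b - a)/((n:ℝ) + 2) < b - a := by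
      rw [div_lt_iff₀ (by positivity)]
      nlinarith [sub_pos.2 hab, Nat.cast_nonneg (α := ℝ) n]
    linarith
  have hsub : ∀ n, Aseq n ⊆ A := by
    intro n y hy
    exact ⟨lt_of_lt_of_le (lt_add_of_pos_right a (heps n)) hy.1, hy.2⟩
  have hAfin : ν A ≠ ⊤ := by
    refine ne_top_of_le_ne_top ENNReal.ofReal_ne_top
      (le_trans (measure_mono ?_) (hν a ha))
    exact fun y hy => hy.1
  -- dominated convergence
  have hbound_int : Integrable (A.indicator fun _ : E => b) ν := by
    rw [integrable_indicator_iff hmeasA]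
    exact integrableOn_const hAfin
  have key : Filter.Tendsto (fun n => ∫ y, (Aseq n).indicator id y ∂ν) Filter.atTop
      (nhds (∫ y, A.indicator id y ∂ν)) := by
    refine tendsto_integral_of_dominated_convergence (A.indicator fun _ => b)
      (fun n => (measurable_id.indicator (hmeasAn n)).aestronglyMeasurable)
      hbound_int ?_ ?_
    · intro n
      refine Filter.Eventually.of_forall fun y => ?_
      by_cases hy : y ∈ Aseq n
      · rw [indicator_of_mem hy, indicator_of_mem (hsub n hy)]
        exact hy.2
      · rw [indicator_of_notMem hy, norm_zero]
        exact indicator_nonneg (fun _ _ => hb.le) y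
    · refine Filter.Eventually.of_forall fun y => ?_
      by_cases hy : y ∈ A
      · apply tendsto_nhds_of_eventually_eq
        have htend : Filter.Tendsto (fun n : ℕ => (b - a)/((n:ℝ) + 2)) Filter.atTop
            (nhds 0) := by
          apply Filter.Tendsto.div_atTop tendsto_const_nhds
          exact Filter.tendsto_atTop_add_const_right _ 2 tendsto_natCast_atTop_atTop
        filter_upwards [htend.eventually_lt_const (sub_pos.2 hy.1)] with n hn
        have hyA : y ∈ Aseq n := ⟨by linarith, hy.2⟩
        rw [indicator_of_mem hyA, indicator_of_mem hy]
      · apply tendsto_nhds_of_eventually_eq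
        refine Filter.Eventually.of_forall fun n => ?_
        rw [indicator_of_notMem (fun h => hy (hsub n h)), indicator_of_notMem hy]
  have hzero : ∀ n : ℕ, ∫ y, (Aseq n).indicator id y ∂ν = 0 := by
    intro n
    rw [integral_indicator (hmeasAn n)]
    exact hcancel _ b (by linarith [heps n]) (hlt n)
  have h := tendsto_nhds_unique (key.congr hzero) tendsto_const_nhds
  rw [integral_indicator hmeasA] at h
  simpa using h

-- sin bound helper
lemma sin_sq_bound {x : ℝ} (hx : |x| ≤ 1) : |Real.sin x - x| ≤ x ^ 2 := by
  have h := Real.sin_bound hx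
  have habs : 0 ≤ |x| := abs_nonneg x
  have h3 : |x| ^ 3 ≤ x ^ 2 := by
    have := pow_le_pow_of_le_one habs hx (show 2 ≤ 3 by norm_num)
    rwa [sq_abs] at this
  have h4 : |x| ^ 4 ≤ x ^ 2 := by
    have := pow_le_pow_of_le_one habs hx (show 2 ≤ 4 by norm_num)
    rwa [sq_abs] at this
  have htri : |Real.sin x - x| ≤ |Real.sin x - (x - x ^ 3 / 6)| + |x ^ 3 / 6| := by
    have : Real.sin x - x = (Real.sin x - (x - x ^ 3 / 6)) + (-(x ^ 3 / 6)) := by ring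
    rw [this]
    exact (abs_add_le _ _).trans (by rw [abs_neg])
  have hx3 : |x ^ 3 / 6| = |x| ^ 3 / 6 := by
    rw [abs_div, abs_pow]; norm_num
  calc |Real.sin x - x| ≤ |x| ^ 4 * (5 / 96) + |x| ^ 3 / 6 := by
        rw [hx3] at htri; exact htri.trans (by linarith [pow_le_pow_of_le_one habs hx (show 4 ≤ 5 by norm_num), pow_nonneg habs 4])
    _ ≤ x ^ 2 * (5 / 96) + x ^ 2 / 6 := by nlinarith
    _ ≤ x ^ 2 := by nlinarith [sq_nonneg x]

/-- For a Lévy measure of order `σ = 1` with tail bound `ν(B_r^c) ≤ Λ/r` and the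
cancellation condition, the imaginary part of the symbol satisfies
`|∫ (sin(ξ·y) − ξ·y 1_{|y|≤1}) ν(dy)| ≤ N(Λ) |ξ|`. -/
theorem stmt_19 (d : ℕ) (Λ : ℝ) (hΛ : 1 ≤ Λ)
    (ν : Measure (EuclideanSpace ℝ (Fin d)))
    (h0 : ν {0} = 0)
    (hlevy : ∫⁻ y, ENNReal.ofReal (min 1 (‖y‖ ^ 2)) ∂ν < ⊤)
    (hν : ∀ r : ℝ, 0 < r → ν {y | r < ‖y‖} ≤ ENNReal.ofReal (Λ / r))
    (hcancel : ∀ r₁ r₂ : ℝ, 0 < r₁ → r₁ < r₂ →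
      (∫ y in {y : EuclideanSpace ℝ (Fin d) | r₁ ≤ ‖y‖ ∧ ‖y‖ ≤ r₂}, y ∂ν) = 0) :
    ∃ N : ℝ, 0 < N ∧ ∀ ξ : EuclideanSpace ℝ (Fin d),
      |∫ y, (Real.sin ⟪ξ, y⟫_ℝ - (if ‖y‖ ≤ 1 then ⟪ξ, y⟫_ℝ else 0)) ∂ν| ≤ N * ‖ξ‖ := by
  set E := EuclideanSpace ℝ (Fin d) with hE
  have hΛ0 : (0:ℝ) < Λ := lt_of_lt_of_le one_pos hΛ
  refine ⟨3 * Λ, by linarith, fun ξ => ?_⟩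
  by_cases hξ : ξ = 0
  · subst hξ
    simp
  -- notation and basic facts
  have hξn : (0:ℝ) < ‖ξ‖ := norm_pos_iff.2 hξ
  set R : ℝ := ‖ξ‖⁻¹ with hRdef
  have hR : 0 < R := inv_pos.2 hξn
  set g : E → ℝ := fun y => Real.sin ⟪ξ, y⟫_ℝ - (if ‖y‖ ≤ 1 then ⟪ξ, y⟫_ℝ else 0) with hg
  have hxm : Measurable fun y : E => ⟪ξ, y⟫_ℝ :=
    (continuous_const.inner continuous_id).measurable
  have hgm : Measurable g := by
    apply Measurable.sub
    · exact Real.measurable_sin.comp hxm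
    · exact Measurable.ite (measurableSet_le measurable_norm measurable_const) hxm
        measurable_const
  have hinner : ∀ y : E, |⟪ξ, y⟫_ℝ| ≤ ‖ξ‖ * ‖y‖ := fun y => abs_real_inner_le_norm ξ y
  -- tail measure bounds
  have htail : ∀ r : ℝ, 0 < r → ν {y : E | r < ‖y‖} ≠ ⊤ := fun r hr =>
    ne_top_of_le_ne_top ENNReal.ofReal_ne_top (hν r hr)
  set B : Set E := {y : E | ‖y‖ ≤ R} with hB
  have hBmeas : MeasurableSet B := measurableSet_le measurable_norm measurable_const
  have hBc : Bᶜ = {y : E | R < ‖y‖} := by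
    ext y; simp [hB, not_le]
  have hBcfin : ν Bᶜ ≠ ⊤ := by rw [hBc]; exact htail R hR
  have hBcle : ν Bᶜ ≤ ENNReal.ofReal (Λ * ‖ξ‖) := by
    rw [hBc]
    refine (hν R hR).trans_eq ?_
    rw [hRdef]
    congr 1
    field_simp
  -- the quadratic bound on small balls
  have hsq : ∀ r : ℝ, 0 < r →
      ∫⁻ y in {y : E | ‖y‖ ≤ r}, ENNReal.ofReal (‖ξ‖ ^ 2 * ‖y‖ ^ 2) ∂ν
        ≤ ENNReal.ofReal (‖ξ‖ ^ 2 * (2 * Λ * r)) := by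
    intro r hr
    have : ∀ y : E, ENNReal.ofReal (‖ξ‖ ^ 2 * ‖y‖ ^ 2)
        = ENNReal.ofReal (‖ξ‖ ^ 2) * ENNReal.ofReal (‖y‖ ^ 2) := fun y =>
      ENNReal.ofReal_mul (by positivity)
    simp_rw [this]
    rw [lintegral_const_mul' _ _ ENNReal.ofReal_ne_top,
      ENNReal.ofReal_mul (by positivity)]
    exact mul_le_mul' le_rfl (momB Λ hΛ0.le ν hν r hr)
  -- pointwise quadratic bound for sin x - x when ‖y‖ ≤ R
  have hptw : ∀ y : E, ‖y‖ ≤ R → |Real.sin ⟪ξ, y⟫_ℝ - ⟪ξ, y⟫_ℝ| ≤ ‖ξ‖ ^ 2 * ‖y‖ ^ 2 := by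
    intro y hy
    have hx1 : |⟪ξ, y⟫_ℝ| ≤ 1 := by
      refine (hinner y).trans ?_
      calc ‖ξ‖ * ‖y‖ ≤ ‖ξ‖ * R := by
            exact mul_le_mul_of_nonneg_left hy hξn.le
        _ = 1 := by rw [hRdef, mul_inv_cancel₀ hξn.ne']
    refine (sin_sq_bound hx1).trans ?_
    calc ⟪ξ, y⟫_ℝ ^ 2 = |⟪ξ, y⟫_ℝ| ^ 2 := (sq_abs _).symm
      _ ≤ (‖ξ‖ * ‖y‖) ^ 2 := by
          apply pow_le_pow_left₀ (abs_nonneg _) (hinner y)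
      _ = ‖ξ‖ ^ 2 * ‖y‖ ^ 2 := by ring
  -- integrability of g
  set r0 : ℝ := min R 1 with hr0def
  have hr0 : 0 < r0 := lt_min hR one_pos
  have hIntg : Integrable g ν := by
    have hP1 : IntegrableOn g {y : E | ‖y‖ ≤ r0} ν := by
      refine ⟨hgm.aestronglyMeasurable.restrict, ?_⟩
      rw [hasFiniteIntegral_iff_norm]
      have hmono : ∫⁻ y in {y : E | ‖y‖ ≤ r0}, ENNReal.ofReal ‖g y‖ ∂ν
          ≤ ∫⁻ y in {y : E | ‖y‖ ≤ r0}, ENNReal.ofReal (‖ξ‖ ^ 2 * ‖y‖ ^ 2) ∂ν := by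
        refine setLIntegral_mono ((measurable_const.pow measurable_const).mul
          ((measurable_norm.pow measurable_const))).ennreal_ofReal ?_
        intro y hy
        change ‖y‖ ≤ r0 at hy
        apply ENNReal.ofReal_le_ofReal
        have hy1 : ‖y‖ ≤ 1 := hy.trans (min_le_right R 1)
        have hyR : ‖y‖ ≤ R := hy.trans (min_le_left R 1)
        rw [hg]
        simp only [if_pos hy1, Real.norm_eq_abs]
        exact hptw y hyR
      exact lt_of_le_of_lt (hmono.trans (hsq r0 hr0)) ENNReal.ofReal_lt_top
    have hP2 : IntegrableOn g {y : E | r0 < ‖y‖} ν := by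
      refine Measure.integrableOn_of_bounded (htail r0 hr0) hgm.aestronglyMeasurable
        (M := 1 + ‖ξ‖) (Filter.Eventually.of_forall fun y => ?_)
      rw [hg]
      simp only [Real.norm_eq_abs]
      refine (abs_sub _ _).trans ?_
      gcongr
      · exact Real.abs_sin_le_one _
      · by_cases h1 : ‖y‖ ≤ 1
        · rw [if_pos h1]
          exact (hinner y).trans (by nlinarith)
        · rw [if_neg h1, abs_zero]
          exact norm_nonneg ξ
    rw [← integrableOn_univ]
    have huniv : (univ : Set E) = {y : E | ‖y‖ ≤ r0} ∪ {y : E | r0 < ‖y‖} := by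
      ext y; simp [le_or_gt]
    rw [huniv]
    exact hP1.union hP2
  -- split the integral at radius R
  have hsplit0 : ∫ y, g y ∂ν = (∫ y in B, g y ∂ν) + ∫ y in Bᶜ, g y ∂ν :=
    (integral_add_compl hBmeas hIntg).symm
  -- analyze the integral over B
  set S : Set E := {y : E | 1 < ‖y‖} with hS
  have hSmeas : MeasurableSet S := measurableSet_lt measurable_const measurable_norm
  set f1 : E → ℝ := fun y => Real.sin ⟪ξ, y⟫_ℝ - ⟪ξ, y⟫_ℝ with hf1
  set f2 : E → ℝ := fun y => S.indicator (fun y => ⟪ξ, y⟫_ℝ) y with hf2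
  have hgf : ∀ y : E, g y = f1 y + f2 y := by
    intro y
    rw [hg, hf1, hf2]
    by_cases h1 : ‖y‖ ≤ 1
    · have : y ∉ S := by simp [hS, not_lt.2 h1]
      simp [if_pos h1, indicator_of_notMem this]
    · have : y ∈ S := by simp [hS, not_le.1 h1]
      simp only [if_neg h1, indicator_of_mem this]
      ring
  have hIf1 : IntegrableOn f1 B ν := by
    refine ⟨((Real.measurable_sin.comp hxm).sub hxm).aestronglyMeasurable.restrict, ?_⟩
    rw [hasFiniteIntegral_iff_norm]
    have hmono : ∫⁻ y in B, ENNReal.ofReal ‖f1 y‖ ∂ν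
        ≤ ∫⁻ y in B, ENNReal.ofReal (‖ξ‖ ^ 2 * ‖y‖ ^ 2) ∂ν := by
      refine setLIntegral_mono ((measurable_const.pow measurable_const).mul
        ((measurable_norm.pow measurable_const))).ennreal_ofReal ?_
      intro y hy
      simp only [hB, mem_setOf_eq] at hy
      exact ENNReal.ofReal_le_ofReal (by rw [hf1]; simpa [Real.norm_eq_abs] using hptw y hy)
    exact lt_of_le_of_lt (hmono.trans (hsq R hR)) ENNReal.ofReal_lt_top
  have hIf2 : IntegrableOn f2 B ν := by
    rw [hf2, IntegrableOn, integrable_indicator_iff hSmeas]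
    rw [IntegrableOn, Measure.restrict_restrict hSmeas]
    refine Measure.integrableOn_of_bounded (μ := ν) (s := S ∩ B) ?_
      hxm.aestronglyMeasurable (M := ‖ξ‖ * R) ?_
    · refine ne_top_of_le_ne_top (htail 1 one_pos) (measure_mono fun y hy => ?_)
      exact hy.1
    · filter_upwards [ae_restrict_mem (hSmeas.inter hBmeas)] with y hy
      rw [Real.norm_eq_abs]
      exact (hinner y).trans (mul_le_mul_of_nonneg_left hy.2 hξn.le)
  have hintB : ∫ y in B, g y ∂ν = (∫ y in B, f1 y ∂ν) + ∫ y in B, f2 y ∂ν := by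
    rw [← integral_add hIf1 hIf2]
    exact integral_congr_ae (Filter.Eventually.of_forall fun y => hgf y)
  -- the f2 integral vanishes by cancellation
  have hf2zero : ∫ y in B, f2 y ∂ν = 0 := by
    rw [hf2, setIntegral_indicator hSmeas]
    rcases le_or_gt R 1 with hR1 | hR1
    · have : B ∩ S = (∅ : Set E) := by
        ext y
        simp only [hB, hS, mem_inter_iff, mem_setOf_eq, mem_empty_iff_false, iff_false]
        rintro ⟨h1, h2⟩; exact absurd (h1.trans hR1) (not_le.2 h2)
      rw [this]
      simp
    · have hset : B ∩ S = {y : E | 1 < ‖y‖ ∧ ‖y‖ ≤ R} := by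
        ext y
        simp only [hB, hS, mem_inter_iff, mem_setOf_eq]
        tauto
      rw [hset]
      have hfin : ν {y : E | 1 < ‖y‖ ∧ ‖y‖ ≤ R} ≠ ⊤ :=
        ne_top_of_le_ne_top (htail 1 one_pos) (measure_mono fun y hy => hy.1)
      have hid : IntegrableOn (fun y : E => y) {y : E | 1 < ‖y‖ ∧ ‖y‖ ≤ R} ν := by
        refine Measure.integrableOn_of_bounded hfin measurable_id.aestronglyMeasurable
          (M := R) ?_
        filter_upwards [ae_restrict_mem ((measurableSet_lt measurable_const
          measurable_norm).inter (measurableSet_le measurable_norm measurable_const))]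
          with y hy
        exact hy.2
      calc ∫ y in {y : E | 1 < ‖y‖ ∧ ‖y‖ ≤ R}, ⟪ξ, y⟫_ℝ ∂ν
          = ⟪ξ, ∫ y in {y : E | 1 < ‖y‖ ∧ ‖y‖ ≤ R}, y ∂ν⟫_ℝ := integral_inner hid ξ
        _ = 0 := by rw [annulus_zero Λ ν hν hcancel 1 R one_pos hR1, inner_zero_right]
  -- the integral over the complement
  have hIsin : IntegrableOn (fun y : E => Real.sin ⟪ξ, y⟫_ℝ) Bᶜ ν := by
    refine Measure.integrableOn_of_bounded hBcfin
      (Real.measurable_sin.comp hxm).aestronglyMeasurable (M := 1)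
      (Filter.Eventually.of_forall fun y => ?_)
    rw [Real.norm_eq_abs]; exact Real.abs_sin_le_one _
  have hIite : IntegrableOn (fun y : E => if ‖y‖ ≤ 1 then ⟪ξ, y⟫_ℝ else 0) Bᶜ ν := by
    refine Measure.integrableOn_of_bounded hBcfin
      (Measurable.ite (measurableSet_le measurable_norm measurable_const) hxm
        measurable_const).aestronglyMeasurable (M := ‖ξ‖)
      (Filter.Eventually.of_forall fun y => ?_)
    rw [Real.norm_eq_abs]
    by_cases h1 : ‖y‖ ≤ 1
    · rw [if_pos h1]; exact (hinner y).trans (by nlinarith)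
    · rw [if_neg h1, abs_zero]; exact norm_nonneg ξ
  have hintBc : ∫ y in Bᶜ, g y ∂ν = (∫ y in Bᶜ, Real.sin ⟪ξ, y⟫_ℝ ∂ν)
      - ∫ y in Bᶜ, (if ‖y‖ ≤ 1 then ⟪ξ, y⟫_ℝ else 0) ∂ν := by
    rw [← integral_sub hIsin hIite]
  -- the indicator integral over Bᶜ vanishes
  have hite_eq : (fun y : E => if ‖y‖ ≤ 1 then ⟪ξ, y⟫_ℝ else 0)
      = fun y : E => ({y : E | ‖y‖ ≤ 1}).indicator (fun y => ⟪ξ, y⟫_ℝ) y := by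
    funext y
    by_cases h1 : ‖y‖ ≤ 1
    · rw [if_pos h1, indicator_of_mem (show y ∈ {y : E | ‖y‖ ≤ 1} from h1)]
    · rw [if_neg h1, indicator_of_notMem (show y ∉ {y : E | ‖y‖ ≤ 1} from h1)]
  have hitezero : ∫ y in Bᶜ, (if ‖y‖ ≤ 1 then ⟪ξ, y⟫_ℝ else 0) ∂ν = 0 := by
    rw [hite_eq, setIntegral_indicator (measurableSet_le measurable_norm measurable_const)]
    rcases le_or_gt (1:ℝ) R with hR1 | hR1
    · have : Bᶜ ∩ {y : E | ‖y‖ ≤ 1} = (∅ : Set E) := by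
        ext y
        rw [hBc]
        simp only [mem_inter_iff, mem_setOf_eq, mem_empty_iff_false, iff_false]
        rintro ⟨h1, h2⟩; exact absurd (h2.trans hR1) (not_le.2 h1)
      rw [this]; simp
    · have hset : Bᶜ ∩ {y : E | ‖y‖ ≤ 1} = {y : E | R < ‖y‖ ∧ ‖y‖ ≤ 1} := by
        ext y
        rw [hBc]
        simp only [mem_inter_iff, mem_setOf_eq]
      rw [hset]
      have hfin : ν {y : E | R < ‖y‖ ∧ ‖y‖ ≤ 1} ≠ ⊤ :=
        ne_top_of_le_ne_top (htail R hR) (measure_mono fun y hy => hy.1)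
      have hid : IntegrableOn (fun y : E => y) {y : E | R < ‖y‖ ∧ ‖y‖ ≤ 1} ν := by
        refine Measure.integrableOn_of_bounded hfin measurable_id.aestronglyMeasurable
          (M := 1) ?_
        filter_upwards [ae_restrict_mem ((measurableSet_lt measurable_const
          measurable_norm).inter (measurableSet_le measurable_norm measurable_const))]
          with y hy
        exact hy.2
      calc ∫ y in {y : E | R < ‖y‖ ∧ ‖y‖ ≤ 1}, ⟪ξ, y⟫_ℝ ∂ν
          = ⟪ξ, ∫ y in {y : E | R < ‖y‖ ∧ ‖y‖ ≤ 1}, y ∂ν⟫_ℝ := integral_inner hid ξ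
        _ = 0 := by rw [annulus_zero Λ ν hν hcancel R 1 hR hR1, inner_zero_right]
  -- bound the f1 integral
  have hbnd1 : |∫ y in B, f1 y ∂ν| ≤ 2 * Λ * ‖ξ‖ := by
    rw [← Real.norm_eq_abs]
    refine (norm_integral_le_lintegral_norm _).trans ?_
    have hmono : ∫⁻ y in B, ENNReal.ofReal ‖f1 y‖ ∂ν
        ≤ ENNReal.ofReal (‖ξ‖ ^ 2 * (2 * Λ * R)) := by
      refine le_trans ?_ (hsq R hR)
      refine setLIntegral_mono ((measurable_const.pow measurable_const).mul
        ((measurable_norm.pow measurable_const))).ennreal_ofReal ?_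
      intro y hy
      simp only [hB, mem_setOf_eq] at hy
      exact ENNReal.ofReal_le_ofReal (by rw [hf1]; simpa [Real.norm_eq_abs] using hptw y hy)
    refine le_trans (ENNReal.toReal_mono ENNReal.ofReal_ne_top hmono) ?_
    rw [ENNReal.toReal_ofReal (by positivity)]
    rw [hRdef]
    rw [show ‖ξ‖ ^ 2 * (2 * Λ * ‖ξ‖⁻¹) = 2 * Λ * (‖ξ‖ ^ 2 * ‖ξ‖⁻¹) by ring,
      sq, mul_assoc ‖ξ‖ ‖ξ‖ ‖ξ‖⁻¹, mul_inv_cancel₀ hξn.ne', mul_one]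
  -- bound the sin integral over Bᶜ
  have hbnd2 : |∫ y in Bᶜ, Real.sin ⟪ξ, y⟫_ℝ ∂ν| ≤ Λ * ‖ξ‖ := by
    rw [← Real.norm_eq_abs]
    refine le_trans (norm_setIntegral_le_of_norm_le_const (C := 1) hBcfin.lt_top
      (fun y _ => by rw [Real.norm_eq_abs]; exact Real.abs_sin_le_one _)) ?_
    rw [one_mul]
    refine ENNReal.toReal_le_of_le_ofReal (by positivity) ?_
    exact hBcle
  -- put it together
  calc |∫ y, g y ∂ν|
      = |(∫ y in B, f1 y ∂ν) + ∫ y in Bᶜ, Real.sin ⟪ξ, y⟫_ℝ ∂ν| := by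
        rw [hsplit0, hintB, hf2zero, hintBc, hitezero, add_zero, sub_zero]
    _ ≤ |∫ y in B, f1 y ∂ν| + |∫ y in Bᶜ, Real.sin ⟪ξ, y⟫_ℝ ∂ν| := abs_add_le _ _
    _ ≤ 2 * Λ * ‖ξ‖ + Λ * ‖ξ‖ := add_le_add hbnd1 hbnd2
    _ = 3 * Λ * ‖ξ‖ := by ring
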